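/- Assume the constrained dual LP is feasible. Let (d*, p*) be an optimal solution of the constrained dual LP with derived policy π*(a|s) = p*(s,a)/d*(s), and let (v*, q*, w*) be an optimal solution of the constrained primal LP. Then π* is greedy with respect to the optimal adjusted value function: for every state s, every action a with π*(a|s) > 0 satisfies a ∈ argmax_{a'} q*(s,a'). -/

import Mathlib

open Finset

section MDPDefs

variable {S A : Type*}

/-- A (stationary, stochastic) policy on finite state/action spaces. -/
def IsPolicy [Fintype A] (π : S → A → ℝ) : Prop :=
  (∀ s a, 0 ≤ π s a) ∧ ∀ s, ∑ a, π s a = 1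

/-- `d` is the (discounted) state visitation density of the policy `π`:
it satisfies `d(s) = (1-γ)ι(s) + γ Σ_{s',a'} d(s') π(a'|s') τ(s|s',a')`. -/
def IsVisit [Fintype S] [Fintype A] (ι : S → ℝ) (τ : S → A → S → ℝ) (γ : ℝ)
    (π : S → A → ℝ) (d : S → ℝ) : Prop :=
  ∀ s, d s = (1 - γ) * ι s + γ * ∑ s', ∑ a', d s' * π s' a' * τ s' a' s

/-- Feasibility for the value-learning dual LP. -/
def DualFeas [Fintype S] [Fintype A] (ι : S → ℝ) (τ : S → A → S → ℝ) (γ : ℝ)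
    (d : S → ℝ) (p : S → A → ℝ) : Prop :=
  (∀ s, ∑ a, p s a = d s) ∧
  (∀ s, d s = (1 - γ) * ι s + γ * ∑ s', ∑ a', p s' a' * τ s' a' s) ∧
  ∀ s a, 0 ≤ p s a

/-- The dual objective: the average reward under the state-action density `p`,
`Σ_{s,a} p(s,a) Σ_{s'} τ(s'|s,a) r(s,a,s')`. -/
def DualObj [Fintype S] [Fintype A] (τ : S → A → S → ℝ) (r : S → A → S → ℝ)
    (p : S → A → ℝ) : ℝ :=
  ∑ s, ∑ a, p s a * ∑ s', τ s a s' * r s a s'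

/-- The standing MDP assumptions: `ι` is an everywhere-positive initial-state
distribution, `τ(·|s,a)` are transition probabilities and `γ ∈ [0,1)`. -/
def IsMDP [Fintype S] [Fintype A] (ι : S → ℝ) (τ : S → A → S → ℝ) (γ : ℝ) : Prop :=
  (∀ s, 0 < ι s) ∧ (∑ s, ι s = 1) ∧
  (∀ s a s', 0 ≤ τ s a s') ∧ (∀ s a, ∑ s', τ s a s' = 1) ∧
  0 ≤ γ ∧ γ < 1

end MDPDefs

section AuxCRL

set_option linter.unusedSectionVars false in
/-- helper: difference of two sups is bounded by a uniform bound on differences. -/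
lemma crl_abs_sup'_sub_sup'_le {A : Type*} [Fintype A] [Nonempty A] {f g : A → ℝ} {c : ℝ}
    (h : ∀ a, |f a - g a| ≤ c) :
    |(univ : Finset A).sup' univ_nonempty f - (univ : Finset A).sup' univ_nonempty g| ≤ c := by
  rw [abs_sub_le_iff]
  constructor
  · rw [sub_le_iff_le_add]
    refine Finset.sup'_le _ _ fun a _ => ?_
    have := abs_sub_le_iff.1 (h a)
    have hg : g a ≤ (univ : Finset A).sup' univ_nonempty g := Finset.le_sup' _ (mem_univ a)
    linarith [this.1]
  · rw [sub_le_iff_le_add]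
    refine Finset.sup'_le _ _ fun a _ => ?_
    have := abs_sub_le_iff.1 (h a)
    have hg : f a ≤ (univ : Finset A).sup' univ_nonempty f := Finset.le_sup' _ (mem_univ a)
    linarith [this.2]

variable {S A : Type*} [Fintype S] [Fintype A] [Nonempty S] [Nonempty A]

set_option linter.unusedSectionVars false in
/-- Existence of the optimal value function (Bellman fixed point). -/
lemma crl_exists_vfix (τ : S → A → S → ℝ) (γ : ℝ) (ρ : S → A → S → ℝ)
    (hτ0 : ∀ s a s', 0 ≤ τ s a s') (hτ1 : ∀ s a, ∑ s', τ s a s' = 1)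
    (hγ0 : 0 ≤ γ) (hγ1 : γ < 1) :
    ∃ v : S → ℝ, ∀ s, v s = (univ : Finset A).sup' univ_nonempty
      (fun a => ∑ s', τ s a s' * (ρ s a s' + γ * v s')) := by
  set T : (S → ℝ) → (S → ℝ) := fun v s => (univ : Finset A).sup' univ_nonempty
      (fun a => ∑ s', τ s a s' * (ρ s a s' + γ * v s')) with hT
  have hlip : LipschitzWith ⟨γ, hγ0⟩ T := by
    refine LipschitzWith.of_dist_le_mul fun u w => ?_
    have hγd : (0:ℝ) ≤ γ * dist u w := mul_nonneg hγ0 dist_nonneg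
    change dist (T u) (T w) ≤ γ * dist u w
    rw [dist_pi_le_iff hγd]
    intro s
    rw [Real.dist_eq]
    refine crl_abs_sup'_sub_sup'_le fun a => ?_
    have : (∑ s', τ s a s' * (ρ s a s' + γ * u s')) - ∑ s', τ s a s' * (ρ s a s' + γ * w s')
        = γ * ∑ s', τ s a s' * (u s' - w s') := by
      rw [← Finset.sum_sub_distrib, Finset.mul_sum]
      refine Finset.sum_congr rfl fun s' _ => by ring
    rw [this, abs_mul, abs_of_nonneg hγ0]
    refine mul_le_mul_of_nonneg_left ?_ hγ0
    calc |∑ s', τ s a s' * (u s' - w s')| ≤ ∑ s', |τ s a s' * (u s' - w s')| :=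
          Finset.abs_sum_le_sum_abs _ _
      _ ≤ ∑ s', τ s a s' * dist u w := by
          refine Finset.sum_le_sum fun s' _ => ?_
          rw [abs_mul, abs_of_nonneg (hτ0 s a s')]
          refine mul_le_mul_of_nonneg_left ?_ (hτ0 s a s')
          rw [← Real.dist_eq]
          exact dist_le_pi_dist u w s'
      _ = dist u w := by rw [← Finset.sum_mul, hτ1, one_mul]
  have hcw : ContractingWith ⟨γ, hγ0⟩ T := ⟨by exact_mod_cast hγ1, hlip⟩
  refine ⟨hcw.fixedPoint T, fun s => ?_⟩
  conv_lhs => rw [← hcw.fixedPoint_isFixedPt]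

set_option linter.unusedSectionVars false in
/-- Existence of the (nonnegative) discounted occupancy of a deterministic policy. -/
lemma crl_exists_occ (ι : S → ℝ) (τ : S → A → S → ℝ) (γ : ℝ)
    (hι : ∀ s, 0 ≤ ι s)
    (hτ0 : ∀ s a s', 0 ≤ τ s a s') (hτ1 : ∀ s a, ∑ s', τ s a s' = 1)
    (hγ0 : 0 ≤ γ) (hγ1 : γ < 1) (g : S → A) :
    ∃ d : S → ℝ, (∀ s, 0 ≤ d s) ∧
      ∀ s, d s = (1 - γ) * ι s + γ * ∑ s', d s' * τ s' (g s') s := by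
  set E := PiLp 1 (fun _ : S => ℝ)
  set F : E → E := fun d => WithLp.toLp 1 (fun s => (1 - γ) * ι s + γ * ∑ s', d s' * τ s' (g s') s : S → ℝ)
    with hF
  have hdist : ∀ x y : E, dist x y = ∑ s, |x s - y s| := by
    intro x y
    rw [PiLp.dist_eq_sum (by norm_num : 0 < (1 : ENNReal).toReal)]
    norm_num [Real.dist_eq]
  have hlip : LipschitzWith ⟨γ, hγ0⟩ F := by
    refine LipschitzWith.of_dist_le_mul fun u w => ?_
    change dist (F u) (F w) ≤ γ * dist u w
    rw [hdist, hdist]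
    have : ∀ s, |F u s - F w s| = γ * |∑ s', (u s' - w s') * τ s' (g s') s| := by
      intro s
      have h2 : ∑ s', (u s' - w s') * τ s' (g s') s
          = (∑ s', u s' * τ s' (g s') s) - ∑ s', w s' * τ s' (g s') s := by
        rw [← Finset.sum_sub_distrib]
        exact Finset.sum_congr rfl fun s' _ => by ring
      have : F u s - F w s = γ * ∑ s', (u s' - w s') * τ s' (g s') s := by
        simp only [hF, WithLp.ofLp_toLp]
        rw [h2]
        ring
      rw [this, abs_mul, abs_of_nonneg hγ0]
    calc ∑ s, |F u s - F w s| = ∑ s, γ * |∑ s', (u s' - w s') * τ s' (g s') s| := by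
          exact Finset.sum_congr rfl fun s _ => this s
      _ ≤ ∑ s, γ * ∑ s', |u s' - w s'| * τ s' (g s') s := by
          refine Finset.sum_le_sum fun s _ => mul_le_mul_of_nonneg_left ?_ hγ0
          calc |∑ s', (u s' - w s') * τ s' (g s') s| ≤ ∑ s', |(u s' - w s') * τ s' (g s') s| :=
                Finset.abs_sum_le_sum_abs _ _
            _ = ∑ s', |u s' - w s'| * τ s' (g s') s := by
                refine Finset.sum_congr rfl fun s' _ => ?_
                rw [abs_mul, abs_of_nonneg (hτ0 _ _ _)]
      _ = γ * ∑ s', |u s' - w s'| * ∑ s, τ s' (g s') s := by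
          rw [← Finset.mul_sum, Finset.sum_comm]
          congr 1
          refine Finset.sum_congr rfl fun s' _ => by rw [Finset.mul_sum]
      _ = γ * ∑ s', |u s' - w s'| := by
          congr 1
          refine Finset.sum_congr rfl fun s' _ => by rw [hτ1, mul_one]
  have hcw : ContractingWith ⟨γ, hγ0⟩ F := ⟨by exact_mod_cast hγ1, hlip⟩
  set d : E := hcw.fixedPoint F with hd
  have hfix : F d = d := hcw.fixedPoint_isFixedPt
  have hiter : ∀ n, ∀ s, 0 ≤ (F^[n] (0 : E)) s := by
    intro n
    induction n with
    | zero => intro s; exact le_rfl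
    | succ n ih =>
      intro s
      rw [Function.iterate_succ_apply']
      show 0 ≤ (1 - γ) * ι s + γ * ∑ s', (F^[n] (0 : E)) s' * τ s' (g s') s
      have h1 : 0 ≤ (1 - γ) * ι s := mul_nonneg (by linarith) (hι s)
      have h2 : 0 ≤ ∑ s', (F^[n] (0 : E)) s' * τ s' (g s') s :=
        Finset.sum_nonneg fun s' _ => mul_nonneg (ih s') (hτ0 _ _ _)
      nlinarith
  have hnn : ∀ s, 0 ≤ d s := by
    intro s
    have htend : Filter.Tendsto (fun n => (F^[n] (0 : E)) s) Filter.atTop (nhds (d s)) := by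
      have h1 : Filter.Tendsto (fun n => F^[n] (0 : E)) Filter.atTop (nhds d) :=
        hcw.tendsto_iterate_fixedPoint 0
      exact ((PiLp.proj (𝕜 := ℝ) 1 (fun _ : S => ℝ) s).continuous.tendsto d).comp h1
    exact ge_of_tendsto htend (Filter.Eventually.of_forall fun n => hiter n s)
  refine ⟨(fun s => d s : S → ℝ), hnn, fun s => ?_⟩
  exact (congrArg (fun x : E => x s) hfix).symm

set_option linter.unusedSectionVars false in
/-- The fundamental identity relating dual-feasible pairs, value functions and
the dual objective. -/
lemma crl_dual_identity (ι : S → ℝ) (τ : S → A → S → ℝ) (γ : ℝ)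
    (d : S → ℝ) (p : S → A → ℝ)
    (h1 : ∀ s, ∑ a, p s a = d s)
    (h2 : ∀ s, d s = (1 - γ) * ι s + γ * ∑ s', ∑ a', p s' a' * τ s' a' s)
    (ρ : S → A → S → ℝ) (v : S → ℝ) :
    ∑ s, ∑ a, p s a * (v s - ∑ s', τ s a s' * (ρ s a s' + γ * v s')) =
      (1 - γ) * (∑ s, ι s * v s) - DualObj τ ρ p := by
  set W : ℝ := ∑ s, ∑ a, p s a * ∑ s', τ s a s' * v s' with hW
  have e1 : ∀ s a, (∑ s', τ s a s' * (ρ s a s' + γ * v s'))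
      = (∑ s', τ s a s' * ρ s a s') + γ * ∑ s', τ s a s' * v s' := by
    intro s a
    rw [Finset.mul_sum, ← Finset.sum_add_distrib]
    exact Finset.sum_congr rfl fun s' _ => by ring
  have hW2 : W = ∑ s, ∑ a, ∑ s', p s a * (τ s a s' * v s') := by
    rw [hW]
    exact Finset.sum_congr rfl fun s _ => Finset.sum_congr rfl fun a _ => Finset.mul_sum _ _ _
  have hsplit : ∑ s, ∑ a, p s a * (v s - ∑ s', τ s a s' * (ρ s a s' + γ * v s'))
      = (∑ s, d s * v s) - DualObj τ ρ p - γ * W := by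
    have step : ∀ s a, p s a * (v s - ∑ s', τ s a s' * (ρ s a s' + γ * v s'))
        = p s a * v s - p s a * (∑ s', τ s a s' * ρ s a s')
          - γ * (p s a * ∑ s', τ s a s' * v s') := by
      intro s a
      rw [e1 s a]
      ring
    calc ∑ s, ∑ a, p s a * (v s - ∑ s', τ s a s' * (ρ s a s' + γ * v s'))
        = ∑ s, ∑ a, (p s a * v s - p s a * (∑ s', τ s a s' * ρ s a s')
            - γ * (p s a * ∑ s', τ s a s' * v s')) :=
          Finset.sum_congr rfl fun s _ => Finset.sum_congr rfl fun a _ => step s a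
      _ = (∑ s, ∑ a, p s a * v s) - (∑ s, ∑ a, p s a * (∑ s', τ s a s' * ρ s a s'))
            - γ * W := by
          simp only [Finset.sum_sub_distrib, ← Finset.mul_sum, hW]
      _ = (∑ s, d s * v s) - DualObj τ ρ p - γ * W := by
          congr 1
          congr 1
          refine Finset.sum_congr rfl fun s _ => ?_
          rw [← Finset.sum_mul, h1]
  have comm3 : ∑ s, ∑ s', ∑ a', p s' a' * (τ s' a' s * v s)
      = ∑ s, ∑ a, ∑ s', p s a * (τ s a s' * v s') := by
    rw [Finset.sum_comm]
    exact Finset.sum_congr rfl fun x _ => Finset.sum_comm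
  have hdv : ∑ s, d s * v s = (1 - γ) * (∑ s, ι s * v s) + γ * W := by
    have step : ∀ s, d s * v s
        = (1 - γ) * (ι s * v s) + γ * ∑ s', ∑ a', p s' a' * (τ s' a' s * v s) := by
      intro s
      rw [h2 s, add_mul, mul_assoc, mul_assoc, Finset.sum_mul]
      congr 2
      refine Finset.sum_congr rfl fun s' _ => ?_
      rw [Finset.sum_mul]
      exact Finset.sum_congr rfl fun a' _ => by ring
    calc ∑ s, d s * v s
        = ∑ s, ((1 - γ) * (ι s * v s) + γ * ∑ s', ∑ a', p s' a' * (τ s' a' s * v s)) :=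
          Finset.sum_congr rfl fun s _ => step s
      _ = (1 - γ) * (∑ s, ι s * v s)
          + γ * ∑ s, ∑ s', ∑ a', p s' a' * (τ s' a' s * v s) := by
          rw [Finset.sum_add_distrib, ← Finset.mul_sum, ← Finset.mul_sum]
      _ = (1 - γ) * (∑ s, ι s * v s) + γ * W := by rw [comm3, ← hW2]
  rw [hsplit, hdv]
  ring

set_option linter.unusedSectionVars false in
/-- Linearity of the dual objective in the reward. -/
lemma crl_dualObj_combine {K : ℕ} (τ : S → A → S → ℝ) (r : S → A → S → ℝ)
    (rk : Fin K → S → A → S → ℝ) (w : Fin K → ℝ) (p : S → A → ℝ) :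
    DualObj τ (fun s a s' => r s a s' + ∑ k, w k * rk k s a s') p
      = DualObj τ r p + ∑ k, w k * DualObj τ (rk k) p := by
  unfold DualObj
  rw [show ∑ k, w k * ∑ s, ∑ a, p s a * ∑ s', τ s a s' * rk k s a s'
      = ∑ s, ∑ a, ∑ k, w k * (p s a * ∑ s', τ s a s' * rk k s a s') by
    calc ∑ k, w k * ∑ s, ∑ a, p s a * ∑ s', τ s a s' * rk k s a s'
        = ∑ k, ∑ s, ∑ a, w k * (p s a * ∑ s', τ s a s' * rk k s a s') := by
          refine Finset.sum_congr rfl fun k _ => ?_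
          rw [Finset.mul_sum]
          exact Finset.sum_congr rfl fun s _ => Finset.mul_sum _ _ _
      _ = ∑ s, ∑ a, ∑ k, w k * (p s a * ∑ s', τ s a s' * rk k s a s') := by
          rw [Finset.sum_comm]
          exact Finset.sum_congr rfl fun s _ => Finset.sum_comm]
  rw [← Finset.sum_add_distrib]
  refine Finset.sum_congr rfl fun s _ => ?_
  rw [← Finset.sum_add_distrib]
  refine Finset.sum_congr rfl fun a _ => ?_
  have expand : ∑ s', τ s a s' * (r s a s' + ∑ k, w k * rk k s a s')
      = (∑ s', τ s a s' * r s a s') + ∑ k, w k * ∑ s', τ s a s' * rk k s a s' := by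
    have swap2 : ∑ k, w k * ∑ s', τ s a s' * rk k s a s'
        = ∑ s', ∑ k, w k * (τ s a s' * rk k s a s') := by
      calc ∑ k, w k * ∑ s', τ s a s' * rk k s a s'
          = ∑ k, ∑ s', w k * (τ s a s' * rk k s a s') :=
            Finset.sum_congr rfl fun k _ => Finset.mul_sum _ _ _
        _ = ∑ s', ∑ k, w k * (τ s a s' * rk k s a s') := Finset.sum_comm
    rw [swap2, ← Finset.sum_add_distrib]
    refine Finset.sum_congr rfl fun s' _ => ?_
    rw [mul_add, Finset.mul_sum]
    congr 1
    exact Finset.sum_congr rfl fun k _ => by ring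
  rw [expand, mul_add]
  congr 1
  rw [Finset.mul_sum]
  exact Finset.sum_congr rfl fun k _ => by ring

set_option linter.unusedSectionVars false in
/-- A convex-combination style rearrangement of double sums. -/
lemma crl_sum_comb {ι₀ : Type*} (Y : Finset ι₀) (lam : ι₀ → ℝ)
    (P : ι₀ → S → A → ℝ) (c : S → A → ℝ) :
    ∑ s, ∑ a, (∑ y ∈ Y, lam y * P y s a) * c s a
      = ∑ y ∈ Y, lam y * ∑ s, ∑ a, P y s a * c s a := by
  calc ∑ s, ∑ a, (∑ y ∈ Y, lam y * P y s a) * c s a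
      = ∑ s, ∑ a, ∑ y ∈ Y, lam y * (P y s a * c s a) := by
        refine Finset.sum_congr rfl fun s _ => Finset.sum_congr rfl fun a _ => ?_
        rw [Finset.sum_mul]
        exact Finset.sum_congr rfl fun y _ => by ring
    _ = ∑ s, ∑ y ∈ Y, ∑ a, lam y * (P y s a * c s a) :=
        Finset.sum_congr rfl fun s _ => Finset.sum_comm
    _ = ∑ y ∈ Y, ∑ s, ∑ a, lam y * (P y s a * c s a) := Finset.sum_comm
    _ = ∑ y ∈ Y, lam y * ∑ s, ∑ a, P y s a * c s a := by
        refine Finset.sum_congr rfl fun y _ => ?_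
        rw [Finset.mul_sum]
        refine Finset.sum_congr rfl fun s _ => ?_
        rw [Finset.mul_sum]

set_option linter.unusedSectionVars false in
/-- Linearity of the dual objective in the state-action density. -/
lemma crl_dualObj_comb {ι₀ : Type*} (Y : Finset ι₀) (τ : S → A → S → ℝ)
    (r : S → A → S → ℝ) (P : ι₀ → S → A → ℝ) (lam : ι₀ → ℝ) :
    DualObj τ r (fun s a => ∑ y ∈ Y, lam y * P y s a)
      = ∑ y ∈ Y, lam y * DualObj τ r (P y) := by
  unfold DualObj
  exact crl_sum_comb Y lam P (fun s a => ∑ s', τ s a s' * r s a s')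

end AuxCRL

/-- given optimal solutions of the (feasible) constrained dual and primal
LPs, the derived policy `π* = p*/d*` is greedy with respect to the optimal adjusted value
function `q*`. -/
theorem crl_policy_greedy
    {S A : Type*} [Fintype S] [Fintype A] [Nonempty S] [Nonempty A]
    (ι : S → ℝ) (τ : S → A → S → ℝ) (γ : ℝ) (r : S → A → S → ℝ)
    (hMDP : IsMDP ι τ γ)
    {K : ℕ} (rk : Fin K → S → A → S → ℝ) (V : Fin K → ℝ)
    (dStar : S → ℝ) (pStar : S → A → ℝ)
    (hDFeas : DualFeas ι τ γ dStar pStar ∧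
      ∀ k, (1 - γ) * V k ≤ DualObj τ (rk k) pStar)
    (hDOpt : ∀ (d : S → ℝ) (p : S → A → ℝ),
      (DualFeas ι τ γ d p ∧ ∀ k, (1 - γ) * V k ≤ DualObj τ (rk k) p) →
      DualObj τ r p ≤ DualObj τ r pStar)
    (vStar : S → ℝ) (qStar : S → A → ℝ) (wStar : Fin K → ℝ)
    (hPFeas : (∀ s a, qStar s a ≤ vStar s) ∧
      (∀ s a, qStar s a = ∑ s', τ s a s' *
        (r s a s' + (∑ k, wStar k * rk k s a s') + γ * vStar s')) ∧
      ∀ k, 0 ≤ wStar k)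
    (hPOpt : ∀ (v : S → ℝ) (q : S → A → ℝ) (w : Fin K → ℝ),
      ((∀ s a, q s a ≤ v s) ∧
        (∀ s a, q s a = ∑ s', τ s a s' *
          (r s a s' + (∑ k, w k * rk k s a s') + γ * v s')) ∧
        ∀ k, 0 ≤ w k) →
      (∑ s, ι s * ((1 - γ) * vStar s)) - ∑ k, wStar k * ((1 - γ) * V k) ≤
        (∑ s, ι s * ((1 - γ) * v s)) - ∑ k, w k * ((1 - γ) * V k)) :
    ∀ s a, 0 < pStar s a / dStar s → ∀ a', qStar s a' ≤ qStar s a := by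
  classical
  obtain ⟨hι, hιsum, hτ0, hτ1, hγ0, hγ1⟩ := hMDP
  obtain ⟨⟨hps, hflow, hppos⟩, hconstr⟩ := hDFeas
  obtain ⟨hqv, hqeq, hwpos⟩ := hPFeas
  -- occupancy measures of all deterministic policies
  have hocc := fun g : S → A =>
    crl_exists_occ ι τ γ (fun s => (hι s).le) hτ0 hτ1 hγ0 hγ1 g
  choose dg hdg0 hdgeq using hocc
  set pg : (S → A) → S → A → ℝ := fun g s a => if a = g s then dg g s else 0 with hpg
  have hpg_sum_mul : ∀ (g : S → A) s (X : A → ℝ), ∑ a, pg g s a * X a = dg g s * X (g s) := by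
    intro g s X
    simp only [hpg, ite_mul, zero_mul]
    rw [Finset.sum_ite_eq' univ (g s) (fun a => dg g s * X a)]
    simp
  have hpgsum : ∀ (g : S → A) s, ∑ a, pg g s a = dg g s := by
    intro g s
    have := hpg_sum_mul g s (fun _ => 1)
    simpa using this
  have hpgflow : ∀ (g : S → A) s,
      dg g s = (1 - γ) * ι s + γ * ∑ s', ∑ a', pg g s' a' * τ s' a' s := by
    intro g s
    rw [hdgeq g s]
    congr 2
    refine Finset.sum_congr rfl fun s' _ => ?_
    rw [hpg_sum_mul g s' (fun a' => τ s' a' s)]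
  have hpgpos : ∀ (g : S → A) s a, 0 ≤ pg g s a := by
    intro g s a
    simp only [hpg]
    split
    · exact hdg0 g s
    · exact le_rfl
  -- optimal value functions for every multiplier w
  have hvfix : ∀ w : Fin K → ℝ, ∃ v : S → ℝ, ∀ s,
      v s = (univ : Finset A).sup' univ_nonempty
        (fun a => ∑ s', τ s a s' *
          ((r s a s' + ∑ k, w k * rk k s a s') + γ * v s')) :=
    fun w => crl_exists_vfix τ γ (fun s a s' => r s a s' + ∑ k, w k * rk k s a s')
      hτ0 hτ1 hγ0 hγ1
  choose vW hvW using hvfix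
  have hqle : ∀ (w : Fin K → ℝ) s a,
      (∑ s', τ s a s' * ((r s a s' + ∑ k, w k * rk k s a s') + γ * vW w s')) ≤ vW w s := by
    intro w s a
    rw [hvW w s]
    exact Finset.le_sup'
      (fun a : A => (∑ s', τ s a s' * ((r s a s' + ∑ k, w k * rk k s a s') + γ * vW w s') : ℝ))
      (mem_univ a)
  have hgreedy : ∀ (w : Fin K → ℝ) s, ∃ a,
      vW w s = ∑ s', τ s a s' * ((r s a s' + ∑ k, w k * rk k s a s') + γ * vW w s') := by
    intro w s
    obtain ⟨a, _, ha⟩ := Finset.exists_mem_eq_sup' (univ_nonempty)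
      (fun a : A => (∑ s', τ s a s' * ((r s a s' + ∑ k, w k * rk k s a s') + γ * vW w s') : ℝ))
    exact ⟨a, by rw [hvW w s, ha]⟩
  -- abbreviations
  set Phi : (Fin K → ℝ) → ℝ := fun w =>
    (1 - γ) * (∑ s, ι s * vW w s) - ∑ k, w k * ((1 - γ) * V k) with hPhi
  set Pval : ℝ :=
    (∑ s, ι s * ((1 - γ) * vStar s)) - ∑ k, wStar k * ((1 - γ) * V k) with hPval
  set gh : (S → A) → Fin K → ℝ :=
    fun g k => DualObj τ (rk k) (pg g) - (1 - γ) * V k with hgh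
  set ell : (S → A) → (Fin K → ℝ) → ℝ :=
    fun g w => DualObj τ r (pg g) + ∑ k, w k * gh g k with hell
  have hform : ∀ x : S → ℝ, ∑ s, ι s * ((1 - γ) * x s) = (1 - γ) * ∑ s, ι s * x s := by
    intro x
    rw [Finset.mul_sum]
    exact Finset.sum_congr rfl fun s _ => by ring
  -- ell in terms of the combined reward
  have hellObj : ∀ (g : S → A) (w : Fin K → ℝ),
      ell g w = DualObj τ (fun s a s' => r s a s' + ∑ k, w k * rk k s a s') (pg g)
        - ∑ k, w k * ((1 - γ) * V k) := by
    intro g w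
    rw [crl_dualObj_combine τ r rk w (pg g)]
    simp only [hell, hgh]
    rw [show ∑ k, w k * (DualObj τ (rk k) (pg g) - (1 - γ) * V k)
        = ∑ k, (w k * DualObj τ (rk k) (pg g) - w k * ((1 - γ) * V k)) from
      Finset.sum_congr rfl fun k _ => by ring]
    rw [Finset.sum_sub_distrib]
    ring
  -- weak duality
  have hweak : ∀ (g : S → A) (w : Fin K → ℝ),
      DualObj τ (fun s a s' => r s a s' + ∑ k, w k * rk k s a s') (pg g)
        ≤ (1 - γ) * ∑ s, ι s * vW w s := by
    intro g w
    have hid := crl_dual_identity ι τ γ (dg g) (pg g) (hpgsum g) (hpgflow g)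
      (fun s a s' => r s a s' + ∑ k, w k * rk k s a s') (vW w)
    have hnn : 0 ≤ ∑ s, ∑ a, pg g s a *
        (vW w s - ∑ s', τ s a s' * ((r s a s' + ∑ k, w k * rk k s a s') + γ * vW w s')) :=
      Finset.sum_nonneg fun s _ => Finset.sum_nonneg fun a _ =>
        mul_nonneg (hpgpos g s a) (sub_nonneg.2 (hqle w s a))
    linarith [hid]
  -- the greedy policy attains the value
  have hgreedyEq : ∀ w : Fin K → ℝ, ∃ g : S → A,
      DualObj τ (fun s a s' => r s a s' + ∑ k, w k * rk k s a s') (pg g)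
        = (1 - γ) * ∑ s, ι s * vW w s := by
    intro w
    choose ga hga using hgreedy w
    refine ⟨ga, ?_⟩
    have hid := crl_dual_identity ι τ γ (dg ga) (pg ga) (hpgsum ga) (hpgflow ga)
      (fun s a s' => r s a s' + ∑ k, w k * rk k s a s') (vW w)
    have hzero : ∑ s, ∑ a, pg ga s a *
        (vW w s - ∑ s', τ s a s' * ((r s a s' + ∑ k, w k * rk k s a s') + γ * vW w s'))
        = 0 := by
      refine Finset.sum_eq_zero fun s _ => ?_
      rw [hpg_sum_mul ga s]
      rw [← hga s]
      simp
    linarith [hid]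
  have hKL1 : ∀ (g : S → A) (w : Fin K → ℝ), ell g w ≤ Phi w := by
    intro g w
    rw [hellObj g w]
    have := hweak g w
    simp only [hPhi]
    linarith
  have hKL2 : ∀ w : Fin K → ℝ, ∃ g : S → A, ell g w = Phi w := by
    intro w
    obtain ⟨g, hg⟩ := hgreedyEq w
    refine ⟨g, ?_⟩
    rw [hellObj g w, hg]
  -- the primal value is a lower bound for Phi on nonneg multipliers
  have hF1 : ∀ w : Fin K → ℝ, (∀ k, 0 ≤ w k) → Pval ≤ Phi w := by
    intro w hw
    have happ := hPOpt (vW w)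
      (fun s a => ∑ s', τ s a s' * (r s a s' + (∑ k, w k * rk k s a s') + γ * vW w s')) w
      ⟨fun s a => hqle w s a, fun s a => rfl, hw⟩
    simp only [hPhi, hPval]
    rw [← hform (vW w)]
    exact happ
  -- vW wStar ≤ vStar pointwise, hence Phi wStar ≤ Pval
  have hvle : ∀ s, vW wStar s ≤ vStar s := by
    have hm : ∃ s0, ∀ s, vStar s0 - vW wStar s0 ≤ vStar s - vW wStar s := by
      obtain ⟨s0, _, hs0⟩ := Finset.exists_mem_eq_inf' (univ_nonempty)
        (fun s => vStar s - vW wStar s)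
      refine ⟨s0, fun s => ?_⟩
      rw [← hs0]
      exact Finset.inf'_le _ (mem_univ s)
    obtain ⟨s0, hs0⟩ := hm
    obtain ⟨a1, ha1⟩ := hgreedy wStar s0
    have h1 : qStar s0 a1 ≤ vStar s0 := hqv s0 a1
    have h2 : qStar s0 a1 - vW wStar s0
        = γ * ∑ s', τ s0 a1 s' * (vStar s' - vW wStar s') := by
      rw [hqeq s0 a1, ha1, ← Finset.sum_sub_distrib, Finset.mul_sum]
      exact Finset.sum_congr rfl fun s' _ => by ring
    have h3 : ∑ s', τ s0 a1 s' * (vStar s0 - vW wStar s0)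
        ≤ ∑ s', τ s0 a1 s' * (vStar s' - vW wStar s') :=
      Finset.sum_le_sum fun s' _ => mul_le_mul_of_nonneg_left (hs0 s') (hτ0 _ _ _)
    have h4 : ∑ s', τ s0 a1 s' * (vStar s0 - vW wStar s0) = vStar s0 - vW wStar s0 := by
      rw [← Finset.sum_mul, hτ1, one_mul]
    have hmain : γ * (vStar s0 - vW wStar s0) ≤ vStar s0 - vW wStar s0 := by
      have := mul_le_mul_of_nonneg_left (h4 ▸ h3) hγ0
      linarith
    have hm0 : 0 ≤ vStar s0 - vW wStar s0 := by nlinarith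
    intro s
    have := hs0 s
    linarith
  have hF2 : Phi wStar ≤ Pval := by
    have h5 : ∑ s, ι s * ((1 - γ) * vW wStar s) ≤ ∑ s, ι s * ((1 - γ) * vStar s) :=
      Finset.sum_le_sum fun s _ => mul_le_mul_of_nonneg_left
        (mul_le_mul_of_nonneg_left (hvle s) (by linarith)) (hι s).le
    rw [hform, hform] at h5
    simp only [hPhi, hPval]
    linarith [hform vStar]
  have hF12 : Phi wStar = Pval := le_antisymm hF2 (hF1 wStar hwpos)
  -- Danskin-type step
  have hF3 : ∀ h : Fin K → ℝ, (∀ k, wStar k = 0 → 0 ≤ h k) →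
      ∃ g : S → A, ell g wStar = Phi wStar ∧ 0 ≤ ∑ k, gh g k * h k := by
    intro h hh
    have hev : ∀ᶠ t in nhdsWithin (0:ℝ) (Set.Ioi 0), ∀ k, 0 ≤ wStar k + t * h k := by
      rw [Filter.eventually_all]
      intro k
      rcases (hwpos k).eq_or_lt with he | hl
      · refine Filter.eventually_of_mem self_mem_nhdsWithin fun t ht => ?_
        have ht' : (0:ℝ) < t := ht
        exact add_nonneg (hwpos k) (mul_nonneg ht'.le (hh k he.symm))
      · have hc : Filter.Tendsto (fun t : ℝ => wStar k + t * h k) (nhds 0) (nhds (wStar k)) := by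
          have hcont : Continuous fun t : ℝ => wStar k + t * h k :=
            continuous_const.add (continuous_id.mul continuous_const)
          have h0 := hcont.tendsto 0
          simpa using h0
        have := hc.eventually (eventually_gt_nhds hl)
        exact (this.filter_mono nhdsWithin_le_nhds).mono fun t ht => le_of_lt ht
    have hex : ∀ᶠ t in nhdsWithin (0:ℝ) (Set.Ioi 0), ∃ g : S → A,
        Phi wStar ≤ ell g wStar + t * ∑ k, gh g k * h k := by
      refine hev.mono fun t ht => ?_
      obtain ⟨g, hg⟩ := hKL2 (fun k => wStar k + t * h k)
      refine ⟨g, ?_⟩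
      have hlin : ell g (fun k => wStar k + t * h k)
          = ell g wStar + t * ∑ k, gh g k * h k := by
        simp only [hell]
        rw [show ∑ k, (wStar k + t * h k) * gh g k
            = ∑ k, (wStar k * gh g k + t * (gh g k * h k)) from
          Finset.sum_congr rfl fun k _ => by ring]
        rw [Finset.sum_add_distrib, ← Finset.mul_sum]
        ring
      have hge : Pval ≤ Phi (fun k => wStar k + t * h k) := hF1 _ ht
      rw [hF12]
      calc Pval ≤ Phi (fun k => wStar k + t * h k) := hge
        _ = ell g (fun k => wStar k + t * h k) := hg.symm
        _ = ell g wStar + t * ∑ k, gh g k * h k := hlin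
    have hfreqg : ∃ g : S → A, ∃ᶠ t in nhdsWithin (0:ℝ) (Set.Ioi 0),
        Phi wStar ≤ ell g wStar + t * ∑ k, gh g k * h k := by
      by_contra hcon
      push_neg at hcon
      replace hcon : ∀ g : S → A, ∀ᶠ t in nhdsWithin (0:ℝ) (Set.Ioi 0),
          ¬ (Phi wStar ≤ ell g wStar + t * ∑ k, gh g k * h k) := fun g => by
        simpa [Filter.not_frequently] using hcon g
      have hallg : ∀ᶠ t in nhdsWithin (0:ℝ) (Set.Ioi 0), ∀ g : S → A,
          ¬ (Phi wStar ≤ ell g wStar + t * ∑ k, gh g k * h k) := by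
        rw [Filter.eventually_all]
        exact hcon
      obtain ⟨t, hb1, g, hb2⟩ := (hallg.and hex).exists
      exact hb1 g hb2
    obtain ⟨g, hfreq⟩ := hfreqg
    have hle : ell g wStar ≤ Phi wStar := hKL1 g wStar
    have htendsto : Filter.Tendsto (fun t : ℝ => ell g wStar + t * ∑ k, gh g k * h k)
        (nhdsWithin (0:ℝ) (Set.Ioi 0)) (nhds (ell g wStar)) := by
      have hcont : Continuous fun t : ℝ => ell g wStar + t * ∑ k, gh g k * h k :=
        continuous_const.add (continuous_id.mul continuous_const)
      have h0 := hcont.tendsto 0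
      simp only [zero_mul, add_zero] at h0
      exact h0.mono_left nhdsWithin_le_nhds
    have hmem : ell g wStar ∈ Set.Ici (Phi wStar) := by
      refine IsClosed.mem_of_frequently_of_tendsto isClosed_Ici ?_ htendsto
      exact hfreq.mono fun t ht => ht
    have heq : ell g wStar = Phi wStar := le_antisymm hle hmem
    have hβ : 0 ≤ ∑ k, gh g k * h k := by
      obtain ⟨t, h1, h2⟩ := (hfreq.and_eventually
        (eventually_mem_nhdsWithin (s := Set.Ioi (0:ℝ)) (a := 0))).exists
      have h2' : (0:ℝ) < t := h2
      rw [heq] at h1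
      nlinarith
    exact ⟨g, heq, hβ⟩
  -- separation step: a feasible convex combination achieving the primal value
  have hDfin : Phi wStar ≤ DualObj τ r pStar := by
    set EK := EuclideanSpace ℝ (Fin K) with hEK
    set GH : (S → A) → EK := fun g => (WithLp.equiv 2 (Fin K → ℝ)).symm (gh g) with hGH
    have hGHapp : ∀ (g : S → A) k, (GH g) k = gh g k := fun g k => rfl
    have hghdef : ∀ (g : S → A) k, gh g k = DualObj τ (rk k) (pg g) - (1 - γ) * V k :=
      fun g k => rfl
    have helldef : ∀ (g : S → A) w, ell g w = DualObj τ r (pg g) + ∑ k, w k * gh g k :=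
      fun g w => rfl
    set M0 : Finset (S → A) := univ.filter (fun g => ell g wStar = Phi wStar) with hM0
    set T : Finset EK := M0.image GH with hT
    set Nset : Set EK := {x | (∀ k, 0 ≤ x k) ∧ ∀ k, 0 < wStar k → x k = 0} with hNset
    have hN0 : (0 : EK) ∈ Nset := ⟨fun k => le_rfl, fun k _ => rfl⟩
    have hN1 : Convex ℝ Nset := by
      intro x hx y hy a b ha hb hab
      refine ⟨fun k => ?_, fun k hk => ?_⟩
      · have hco : (a • x + b • y) k = a * x k + b * y k := rfl
        rw [hco]
        exact add_nonneg (mul_nonneg ha (hx.1 k)) (mul_nonneg hb (hy.1 k))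
      · have hco : (a • x + b • y) k = a * x k + b * y k := rfl
        rw [hco, hx.2 k hk, hy.2 k hk]
        ring
    have hN2 : IsClosed Nset := by
      have h1 : IsClosed {x : EK | ∀ k, 0 ≤ x k} := by
        have he : {x : EK | ∀ k, 0 ≤ x k} = ⋂ k, {x : EK | 0 ≤ x k} := by
          ext x; simp [Set.mem_iInter]
        rw [he]
        refine isClosed_iInter fun k => ?_
        exact isClosed_le continuous_const
          (PiLp.proj (𝕜 := ℝ) 2 (fun _ : Fin K => ℝ) k).continuous
      have h2 : IsClosed {x : EK | ∀ k, 0 < wStar k → x k = 0} := by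
        have he : {x : EK | ∀ k, 0 < wStar k → x k = 0}
            = ⋂ k, {x : EK | 0 < wStar k → x k = 0} := by
          ext x; simp [Set.mem_iInter]
        rw [he]
        refine isClosed_iInter fun k => ?_
        by_cases hk : 0 < wStar k
        · have he2 : {x : EK | 0 < wStar k → x k = 0} = {x : EK | x k = 0} := by
            ext x; simp [hk]
          rw [he2]
          exact isClosed_eq (PiLp.proj (𝕜 := ℝ) 2 (fun _ : Fin K => ℝ) k).continuous
            continuous_const
        · have he2 : {x : EK | 0 < wStar k → x k = 0} = Set.univ := by
            ext x; simp [hk]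
          rw [he2]; exact isClosed_univ
      have he : Nset = {x : EK | ∀ k, 0 ≤ x k} ∩ {x : EK | ∀ k, 0 < wStar k → x k = 0} := rfl
      rw [he]; exact h1.inter h2
    have hdecomp : ∀ (f : EK →L[ℝ] ℝ) (x : EK),
        f x = ∑ k, x k * f (EuclideanSpace.single k 1) := by
      intro f x
      have hx : x = ∑ k, x k • EuclideanSpace.single k (1:ℝ) := by
        ext j
        rw [WithLp.ofLp_sum, Finset.sum_apply]
        simp [EuclideanSpace.single_apply]
      conv_lhs => rw [hx]
      rw [map_sum]
      refine Finset.sum_congr rfl fun k _ => ?_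
      rw [map_smul]
      simp
    have hinter : ∃ x : EK, x ∈ convexHull ℝ (↑T : Set EK) ∧ x ∈ Nset := by
      by_contra hcon
      push_neg at hcon
      have hdisj : Disjoint (convexHull ℝ (↑T : Set EK)) Nset :=
        Set.disjoint_left.2 fun x hx hxN => hcon x hx hxN
      obtain ⟨f, u, v, hfu, huv, hfv⟩ := _root_.geometric_hahn_banach_compact_closed
        (convex_convexHull ℝ _) (T.finite_toSet.isCompact_convexHull ℝ) hN1 hN2 hdisj
      have hv0 : v < 0 := by
        have := hfv 0 hN0
        simpa using this
      have hfN : ∀ x ∈ Nset, 0 ≤ f x := by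
        intro x hx
        by_contra hneg
        push_neg at hneg
        have hc : (0:ℝ) < (v - 1) / f x := div_pos_of_neg_of_neg (by linarith) hneg
        have hmem : ((v - 1) / f x) • x ∈ Nset := by
          refine ⟨fun k => ?_, fun k hk => ?_⟩
          · have hco : (((v - 1) / f x) • x) k = ((v - 1) / f x) * x k := rfl
            rw [hco]
            exact mul_nonneg hc.le (hx.1 k)
          · have hco : (((v - 1) / f x) • x) k = ((v - 1) / f x) * x k := rfl
            rw [hco, hx.2 k hk, mul_zero]
        have hlt := hfv _ hmem
        rw [map_smul, smul_eq_mul, div_mul_cancel₀ _ (ne_of_lt hneg)] at hlt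
        linarith
      obtain ⟨g, hgM, hgpos⟩ := hF3 (fun k => f (EuclideanSpace.single k 1))
        (by
          intro k hk
          refine hfN _ ⟨fun j => ?_, fun j hj => ?_⟩
          · rw [EuclideanSpace.single_apply]
            split <;> norm_num
          · rw [EuclideanSpace.single_apply]
            have hjk : j ≠ k := by
              intro hjk; rw [hjk, hk] at hj; exact lt_irrefl 0 hj
            rw [if_neg hjk])
      have hfg : f (GH g) = ∑ k, gh g k * f (EuclideanSpace.single k 1) := by
        have h1 := hdecomp f (GH g)
        have h2 : ∑ k, (GH g) k * f (EuclideanSpace.single k 1)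
            = ∑ k, gh g k * f (EuclideanSpace.single k 1) :=
          Finset.sum_congr rfl fun k _ => by rw [hGHapp]
        exact h1.trans h2
      have hgX : GH g ∈ convexHull ℝ (↑T : Set EK) := by
        refine subset_convexHull ℝ _ ?_
        rw [Finset.mem_coe, hT, Finset.mem_image]
        exact ⟨g, by simp [hM0, hgM], rfl⟩
      have hlt := hfu _ hgX
      rw [hfg] at hlt
      linarith
    obtain ⟨x, hxX, hxN⟩ := hinter
    rw [Finset.mem_convexHull'] at hxX
    obtain ⟨lam, hlam0, hlam1, hlamx⟩ := hxX
    have hpre : ∀ y ∈ T, ∃ g : S → A, ell g wStar = Phi wStar ∧ GH g = y := by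
      intro y hy
      rw [hT, Finset.mem_image] at hy
      obtain ⟨g, hg1, hg2⟩ := hy
      rw [hM0, Finset.mem_filter] at hg1
      exact ⟨g, hg1.2, hg2⟩
    choose gof hgof1 hgof2 using hpre
    set pb : S → A → ℝ := fun s a => ∑ y ∈ T.attach, lam y.1 * pg (gof y.1 y.2) s a with hpb
    set db : S → ℝ := fun s => ∑ y ∈ T.attach, lam y.1 * dg (gof y.1 y.2) s with hdb
    have hlam1' : ∑ y ∈ T.attach, lam y.1 = 1 := by
      rw [Finset.sum_attach T (fun y => lam y)]
      exact hlam1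
    have hlam0' : ∀ y : {z // z ∈ T}, 0 ≤ lam y.1 := fun y => hlam0 y.1 y.2
    have hxk : ∀ k, x k = ∑ y ∈ T.attach, lam y.1 * (y.1 : EK) k := by
      intro k
      have h1 : x k = (∑ y ∈ T, lam y • y) k := by rw [hlamx]
      rw [h1, WithLp.ofLp_sum, Finset.sum_apply, ← Finset.sum_attach T (fun y => (lam y • y) k)]
      exact Finset.sum_congr rfl fun y _ => rfl
    have hghy : ∀ (y : {z // z ∈ T}) k, gh (gof y.1 y.2) k = (y.1 : EK) k := by
      intro y k
      calc gh (gof y.1 y.2) k = (GH (gof y.1 y.2)) k := (hGHapp _ k).symm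
        _ = (y.1 : EK) k := by rw [hgof2 y.1 y.2]
    have hpbsum : ∀ s, ∑ a, pb s a = db s := by
      intro s
      simp only [hpb, hdb]
      rw [Finset.sum_comm]
      refine Finset.sum_congr rfl fun y _ => ?_
      rw [← Finset.mul_sum, hpgsum]
    have hpbpos : ∀ s a, 0 ≤ pb s a := by
      intro s a
      exact Finset.sum_nonneg fun y _ => mul_nonneg (hlam0' y) (hpgpos _ s a)
    have hpbflow : ∀ s, db s = (1 - γ) * ι s + γ * ∑ s', ∑ a', pb s' a' * τ s' a' s := by
      intro s
      have h3 : ∑ s', ∑ a', pb s' a' * τ s' a' s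
          = ∑ y ∈ T.attach, lam y.1 * ∑ s', ∑ a', pg (gof y.1 y.2) s' a' * τ s' a' s := by
        simp only [hpb]
        exact crl_sum_comb T.attach _ _ (fun s' a' => τ s' a' s)
      rw [h3]
      simp only [hdb]
      calc ∑ y ∈ T.attach, lam y.1 * dg (gof y.1 y.2) s
          = ∑ y ∈ T.attach, (lam y.1 * ((1 - γ) * ι s)
              + γ * (lam y.1 * ∑ s', ∑ a', pg (gof y.1 y.2) s' a' * τ s' a' s)) := by
            refine Finset.sum_congr rfl fun y _ => ?_
            rw [hpgflow (gof y.1 y.2) s]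
            ring
        _ = (1 - γ) * ι s + γ * ∑ y ∈ T.attach,
              lam y.1 * ∑ s', ∑ a', pg (gof y.1 y.2) s' a' * τ s' a' s := by
            rw [Finset.sum_add_distrib, ← Finset.sum_mul, hlam1', ← Finset.mul_sum]
            ring
    have hpbconstr : ∀ k, (1 - γ) * V k ≤ DualObj τ (rk k) pb := by
      intro k
      have hobj : DualObj τ (rk k) pb
          = ∑ y ∈ T.attach, lam y.1 * DualObj τ (rk k) (pg (gof y.1 y.2)) := by
        simp only [hpb]
        exact crl_dualObj_comb T.attach τ (rk k) _ _
      rw [hobj]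
      have hterm : ∀ y ∈ T.attach, lam y.1 * DualObj τ (rk k) (pg (gof y.1 y.2))
          = lam y.1 * ((y.1 : EK) k + (1 - γ) * V k) := by
        intro y _
        have h5 := hghy y k
        rw [hghdef] at h5
        have h6 : DualObj τ (rk k) (pg (gof y.1 y.2)) = (y.1 : EK) k + (1 - γ) * V k := by
          linarith
        rw [h6]
      rw [Finset.sum_congr rfl hterm]
      have hexp : ∑ y ∈ T.attach, lam y.1 * ((y.1 : EK) k + (1 - γ) * V k)
          = (∑ y ∈ T.attach, lam y.1 * (y.1 : EK) k)
            + (∑ y ∈ T.attach, lam y.1) * ((1 - γ) * V k) := by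
        rw [Finset.sum_mul, ← Finset.sum_add_distrib]
        exact Finset.sum_congr rfl fun y _ => by ring
      rw [hexp, hlam1', ← hxk k, one_mul]
      have := hxN.1 k
      linarith
    have hpbobj : DualObj τ r pb = Phi wStar := by
      have hobj : DualObj τ r pb
          = ∑ y ∈ T.attach, lam y.1 * DualObj τ r (pg (gof y.1 y.2)) := by
        simp only [hpb]
        exact crl_dualObj_comb T.attach τ r _ _
      rw [hobj]
      have hterm : ∀ y ∈ T.attach, lam y.1 * DualObj τ r (pg (gof y.1 y.2))
          = lam y.1 * (Phi wStar - ∑ k, wStar k * (y.1 : EK) k) := by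
        intro y _
        have h1 := hgof1 y.1 y.2
        have h2 : ∑ k, wStar k * gh (gof y.1 y.2) k = ∑ k, wStar k * (y.1 : EK) k :=
          Finset.sum_congr rfl fun k _ => by rw [hghy y k]
        rw [helldef] at h1
        rw [h2] at h1
        have h6 : DualObj τ r (pg (gof y.1 y.2))
            = Phi wStar - ∑ k, wStar k * (y.1 : EK) k := by linarith
        rw [h6]
      rw [Finset.sum_congr rfl hterm]
      have hswap : ∑ y ∈ T.attach, lam y.1 * ∑ k, wStar k * (y.1 : EK) k
          = ∑ k, wStar k * x k := by
        calc ∑ y ∈ T.attach, lam y.1 * ∑ k, wStar k * (y.1 : EK) k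
            = ∑ y ∈ T.attach, ∑ k, wStar k * (lam y.1 * (y.1 : EK) k) := by
              refine Finset.sum_congr rfl fun y _ => ?_
              rw [Finset.mul_sum]
              exact Finset.sum_congr rfl fun k _ => by ring
          _ = ∑ k, ∑ y ∈ T.attach, wStar k * (lam y.1 * (y.1 : EK) k) := Finset.sum_comm
          _ = ∑ k, wStar k * x k := by
              refine Finset.sum_congr rfl fun k _ => ?_
              rw [← Finset.mul_sum, ← hxk k]
      have hx0 : ∑ k, wStar k * x k = 0 := by
        refine Finset.sum_eq_zero fun k _ => ?_
        rcases (hwpos k).eq_or_lt with he | hl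
        · rw [← he, zero_mul]
        · rw [hxN.2 k hl, mul_zero]
      have hfin : ∑ y ∈ T.attach, lam y.1 * (Phi wStar - ∑ k, wStar k * (y.1 : EK) k)
          = (∑ y ∈ T.attach, lam y.1) * Phi wStar
            - ∑ y ∈ T.attach, lam y.1 * ∑ k, wStar k * (y.1 : EK) k := by
        rw [Finset.sum_mul, ← Finset.sum_sub_distrib]
        exact Finset.sum_congr rfl fun y _ => by ring
      rw [hfin, hlam1', hswap, hx0, one_mul, sub_zero]
    rw [← hpbobj]
    exact hDOpt db pb ⟨⟨hpbsum, hpbflow, hpbpos⟩, hpbconstr⟩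
  -- final complementary-slackness computation
  have hidStar := crl_dual_identity ι τ γ dStar pStar hps hflow
    (fun s a s' => r s a s' + ∑ k, wStar k * rk k s a s') vStar
  have hq' : ∀ s a, (∑ s', τ s a s' *
      ((r s a s' + ∑ k, wStar k * rk k s a s') + γ * vStar s')) = qStar s a :=
    fun s a => (hqeq s a).symm
  simp only [hq'] at hidStar
  have hcomb := crl_dualObj_combine τ r rk wStar pStar
  have hconstrStar : ∑ k, wStar k * ((1 - γ) * V k)
      ≤ ∑ k, wStar k * DualObj τ (rk k) pStar :=
    Finset.sum_le_sum fun k _ => mul_le_mul_of_nonneg_left (hconstr k) (hwpos k)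
  have hPform : Pval = (1 - γ) * (∑ s, ι s * vStar s) - ∑ k, wStar k * ((1 - γ) * V k) := by
    simp only [hPval]
    rw [hform vStar]
  have hsum_le : ∑ s, ∑ a, pStar s a * (vStar s - qStar s a) ≤ 0 := by
    rw [hidStar, hcomb]
    have h7 : Pval ≤ DualObj τ r pStar := by rw [← hF12]; exact hDfin
    linarith [hPform, hconstrStar]
  have hsum_ge : 0 ≤ ∑ s, ∑ a, pStar s a * (vStar s - qStar s a) :=
    Finset.sum_nonneg fun s _ => Finset.sum_nonneg fun a _ =>
      mul_nonneg (hppos s a) (sub_nonneg.2 (hqv s a))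
  have hsum0 : ∑ s, ∑ a, pStar s a * (vStar s - qStar s a) = 0 :=
    le_antisymm hsum_le hsum_ge
  have hterm0 : ∀ s ∈ (univ : Finset S), ∀ a ∈ (univ : Finset A),
      pStar s a * (vStar s - qStar s a) = 0 := by
    have houter := (Finset.sum_eq_zero_iff_of_nonneg (fun s _ =>
      Finset.sum_nonneg fun a _ => mul_nonneg (hppos s a) (sub_nonneg.2 (hqv s a)))).1 hsum0
    intro s hs a ha
    exact (Finset.sum_eq_zero_iff_of_nonneg (fun a _ =>
      mul_nonneg (hppos s a) (sub_nonneg.2 (hqv s a)))).1 (houter s hs) a ha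
  intro s a hratio a'
  have hpa : 0 < pStar s a := by
    rcases (hppos s a).eq_or_lt with he | hl
    · exfalso
      rw [← he, zero_div] at hratio
      exact lt_irrefl 0 hratio
    · exact hl
  have h8 := hterm0 s (mem_univ s) a (mem_univ a)
  have h9 : vStar s - qStar s a = 0 := by
    rcases mul_eq_zero.1 h8 with h | h
    · exact absurd h (ne_of_gt hpa)
    · exact h
  have h10 := hqv s a'
  linarith
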